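/- Fix i ∈ {1,…,N}. Let (ζ_1,…,ζ_N) be a Lamé solution with ζ_i nowhere vanishing, (X_1,…,X_N) a tangent solution, and Ω : ℤ^N → ℝ a potential satisfying Δ_m Ω = X_m·(T_m ζ_m) for all m = 1,…,N. Define the adjoint Levy-transformed data X_i[1] := −Ω/ζ_i, X_k[1] := X_k − Q_{ki}·Ω/ζ_i for k ≠ i, and Q_{ik}[1] := −ζ_k/ζ_i for k ≠ i. Then for every k ≠ i: Δ_k X_i[1] = (T_k Q_{ik}[1])·X_k[1]. -/

import Mathlib

noncomputable section

/-- Shift operator `T_j`: `(T_j f)(n) = f(n + e_j)`. -/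
def T {N : ℕ} (j : Fin N) (f : (Fin N → ℤ) → ℝ) : (Fin N → ℤ) → ℝ :=
  fun n => f (n + Pi.single j 1)

/-- Difference operator `Δ_j = T_j − 1`. -/
def Δ {N : ℕ} (j : Fin N) (f : (Fin N → ℤ) → ℝ) : (Fin N → ℤ) → ℝ :=
  fun n => f (n + Pi.single j 1) - f n

/-- Adjoint Levy transformation in the `i`-th direction: for every `k ≠ i`,
`Δ_k X_i[1] = (T_k Q_{ik}[1])·X_k[1]` with `X_i[1] = −Ω/ζ_i`,
`X_k[1] = X_k − Q_{ki}·Ω/ζ_i` and `Q_{ik}[1] = −ζ_k/ζ_i`, where `Ω` is the potential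
with `Δ_m Ω = X_m·(T_m ζ_m)`. -/
theorem statement_10 (N : ℕ) (hN : 2 ≤ N)
    (Q : Fin N → Fin N → (Fin N → ℤ) → ℝ)
    (i : Fin N)
    (ζ X : Fin N → (Fin N → ℤ) → ℝ)
    (hζ : ∀ j k : Fin N, j ≠ k → Δ j (ζ k) = Q j k * T j (ζ j))
    (hX : ∀ j k : Fin N, j ≠ k → Δ k (X j) = T k (Q j k) * X k)
    (hζi : ∀ n : Fin N → ℤ, ζ i n ≠ 0)
    (Ω : (Fin N → ℤ) → ℝ)
    (hΩ : ∀ m : Fin N, Δ m Ω = X m * T m (ζ m)) :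
    ∀ k : Fin N, k ≠ i →
      Δ k (-(Ω / ζ i))
        = T k (-(ζ k / ζ i)) * (X k - Q k i * Ω / ζ i) := by
  intro k hk
  funext n
  have h1 := congrFun (hΩ k) n
  have h2 := congrFun (hζ k i hk) n
  simp only [Δ, T, Pi.mul_apply, Pi.neg_apply, Pi.div_apply, Pi.sub_apply] at h1 h2 ⊢
  have hz := hζi n
  have hz' := hζi (n + Pi.single k 1)
  have hO : Ω (n + Pi.single k 1) = Ω n + X k n * ζ k (n + Pi.single k 1) := by
    linarith
  have hZ : ζ i (n + Pi.single k 1) = ζ i n + Q k i n * ζ k (n + Pi.single k 1) := by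
    linarith
  rw [hZ] at hz'
  rw [hO, hZ]
  have hz'' : ζ i n + ζ k (n + Pi.single k 1) * Q k i n ≠ 0 := by
    rw [mul_comm]; exact hz'
  field_simp
  ring
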